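/- Let T be an ergodic, measure-preserving Markov transformation of a probability space (X, m) with finite Markov partition β, let S be a finite state space, and suppose each transition function f_i : X → S is constant on each element of β. If the deterministic walk is transitive on S, then there exists a cylinder set a of positive measure that is transitive: for every i ∈ S and every x ∈ a, the orbit (U_{i,n}(x))_{n≥0} visits every state in S at least once. -/
import Mathlib


open MeasureTheory Set Filter

/-- The skew product `T_f (x, i) = (T x, f_i x)` driving a deterministic walk. -/
def detSkew {X S : Type*} (T : X → X) (f : S → X → S) : X × S → X × S :=
  fun p => (T p.1, f p.2 p.1)

/-- The deterministic walk `U_{i,n}(x) = π₂ (T_f^n (x, i))`. -/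
def detWalk {X S : Type*} (T : X → X) (f : S → X → S) (i : S) (n : ℕ) (x : X) : S :=
  ((detSkew T f)^[n] (x, i)).2

/-- The deterministic walk is transitive on `S` if for all `i j`, a.e. point
visits `j` at some positive time when started from `i`. -/
def WalkTransitive {X S : Type*} [MeasurableSpace X] (m : Measure X)
    (T : X → X) (f : S → X → S) : Prop :=
  ∀ i j : S, m {x | ∃ n, 1 ≤ n ∧ detWalk T f i n x = j} = 1

/-- A (non-singular) Markov transformation with Markov partition `P`. -/
structure IsMarkovMap {Y : Type*} [MeasurableSpace Y] (μ : Measure Y) (R : Y → Y)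
    (P : Set (Set Y)) : Prop where
  nonsingular : ∀ A : Set Y, MeasurableSet A → μ A = 0 → μ (R ⁻¹' A) = 0
  measurableSet : ∀ a ∈ P, MeasurableSet a
  pairwiseDisjoint : P.PairwiseDisjoint id
  sUnion_eq : ⋃₀ P = Set.univ
  image_sUnion : ∀ a ∈ P, ∃ Q ⊆ P, R '' a = ⋃₀ Q
  injOn : ∀ a ∈ P, Set.InjOn R a

/-- `a` communicates with `b`: a positive measure set of points of `a` visits `b`. -/
def Communicates {Y : Type*} [MeasurableSpace Y] (μ : Measure Y) (R : Y → Y)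
    (a b : Set Y) : Prop :=
  0 < μ {x | x ∈ a ∧ ∃ n, 1 ≤ n ∧ R^[n] x ∈ b}

/-- The communication class of `a` in the partition `P`. -/
def commClass {Y : Type*} [MeasurableSpace Y] (μ : Measure Y) (R : Y → Y)
    (P : Set (Set Y)) (a : Set Y) : Set (Set Y) :=
  {b ∈ P | Communicates μ R a b ∧ Communicates μ R b a}

/-- `C` is a communication class of the partition `P`. -/
def IsCommClass {Y : Type*} [MeasurableSpace Y] (μ : Measure Y) (R : Y → Y)
    (P : Set (Set Y)) (C : Set (Set Y)) : Prop :=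
  ∃ a ∈ P, C = commClass μ R P a

/-- `C` is a closed communication class of the partition `P`. -/
def IsClosedCommClass {Y : Type*} [MeasurableSpace Y] (μ : Measure Y) (R : Y → Y)
    (P : Set (Set Y)) (C : Set (Set Y)) : Prop :=
  IsCommClass μ R P C ∧ ∀ a ∈ C, ∀ b ∈ P, Communicates μ R a b → Communicates μ R b a

/-- The product partition `β̃ = β × S`. -/
def prodPartition {X : Type*} (S : Type*) (β : Set (Set X)) : Set (Set (X × S)) :=
  {c | ∃ a ∈ β, ∃ i : S, c = a ×ˢ ({i} : Set S)}

/-- The measure `μ = (m / #S) × counting measure` on `X × S`. -/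
noncomputable def fiberMeasure {X : Type*} (S : Type*) [MeasurableSpace X]
    [MeasurableSpace S] [Fintype S] (m : Measure X) : Measure (X × S) :=
  (Fintype.card S : ENNReal)⁻¹ • m.prod Measure.count

/-- The `n`-cylinder `[w 0, …, w (n-1)] = ⋂ j, R^{-j} (w j)`. -/
def cylinder {Y : Type*} (R : Y → Y) {n : ℕ} (w : Fin n → Set Y) : Set Y :=
  ⋂ j : Fin n, (R^[(j : ℕ)]) ⁻¹' w j

/-- The Strong Distortion Property: the Radon–Nikodym derivatives
`v'_a = d(μ ∘ R^{-n})/dμ` on images of cylinders have a.e. bounded ratio. -/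
def StrongDistortion {Y : Type*} [MeasurableSpace Y] (μ : Measure Y) (R : Y → Y)
    (P : Set (Set Y)) : Prop :=
  ∃ D : ENNReal, 1 ≤ D ∧ D ≠ ⊤ ∧
    ∀ n : ℕ, 1 ≤ n → ∀ w : Fin n → Set Y, (∀ j, w j ∈ P) →
      ∀ v : Y → ENNReal, Measurable v →
        (∀ B : Set Y, MeasurableSet B →
          ∫⁻ x in (R^[n] '' cylinder R w) ∩ B, v x ∂μ = μ (cylinder R w ∩ R^[n] ⁻¹' B)) →
        ∀ᵐ x ∂μ.restrict (R^[n] '' cylinder R w),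
          ∀ᵐ y ∂μ.restrict (R^[n] '' cylinder R w), v x / v y ≤ D

/-- The Finite Images property for a Markov map. -/
def FiniteImages {Y : Type*} (R : Y → Y) (P : Set (Set Y)) : Prop :=
  {s : Set Y | ∃ a ∈ P, s = R '' a}.Finite

/-- The partition `P` is irreducible under `R`: all elements intercommunicate. -/
def IrreduciblePartition {Y : Type*} [MeasurableSpace Y] (μ : Measure Y) (R : Y → Y)
    (P : Set (Set Y)) : Prop :=
  ∀ a ∈ P, ∀ b ∈ P, Communicates μ R a b

lemma detSkew_iterate_fst {X S : Type*} (T : X → X) (f : S → X → S) (x : X) (i : S) (n : ℕ) :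
    ((detSkew T f)^[n] (x, i)).1 = T^[n] x := by
  induction n with
  | zero => rfl
  | succ n ih =>
      rw [Function.iterate_succ_apply', Function.iterate_succ_apply']
      show (detSkew T f ((detSkew T f)^[n] (x, i))).1 = T (T^[n] x)
      rw [← ih]; rfl

lemma detWalk_succ {X S : Type*} (T : X → X) (f : S → X → S) (i : S) (n : ℕ) (x : X) :
    detWalk T f i (n + 1) x = f (detWalk T f i n x) (T^[n] x) := by
  unfold detWalk
  rw [Function.iterate_succ_apply']
  show f ((detSkew T f)^[n] (x, i)).2 ((detSkew T f)^[n] (x, i)).1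
      = f ((detSkew T f)^[n] (x, i)).2 (T^[n] x)
  rw [detSkew_iterate_fst]

lemma walk_eq_of_same_word {X S : Type*} (T : X → X) (f : S → X → S) (β : Set (Set X))
    (hconst : ∀ i : S, ∀ a ∈ β, ∀ x ∈ a, ∀ y ∈ a, f i x = f i y)
    {N : ℕ} (w : Fin N → Set X) (hw : ∀ j, w j ∈ β)
    {x y : X} (hx : ∀ j : Fin N, T^[(j : ℕ)] x ∈ w j)
    (hy : ∀ j : Fin N, T^[(j : ℕ)] y ∈ w j)
    (i : S) : ∀ k, k ≤ N → detWalk T f i k x = detWalk T f i k y := by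
  intro k
  induction k with
  | zero => intro _; rfl
  | succ k ih =>
      intro hk
      have hk' : k < N := hk
      rw [detWalk_succ, detWalk_succ, ih (le_of_lt hk')]
      exact hconst _ _ (hw ⟨k, hk'⟩) _ (hx ⟨k, hk'⟩) _ (hy ⟨k, hk'⟩)

lemma meas_f_pre {X S : Type*} [MeasurableSpace X] (β : Set (Set X))
    (hβfin : β.Finite) (hmeas : ∀ a ∈ β, MeasurableSet a) (hcover : ⋃₀ β = Set.univ)
    (f : S → X → S)
    (hconst : ∀ i : S, ∀ a ∈ β, ∀ x ∈ a, ∀ y ∈ a, f i x = f i y)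
    (s j : S) : MeasurableSet {x | f s x = j} := by
  have heq : {x | f s x = j} = ⋃₀ {a ∈ β | ∀ x ∈ a, f s x = j} := by
    ext x
    constructor
    · intro hx
      have hx' : x ∈ ⋃₀ β := by rw [hcover]; trivial
      obtain ⟨a, ha, hxa⟩ := hx'
      exact ⟨a, ⟨ha, fun y hy => (hconst s a ha y hy x hxa).trans hx⟩, hxa⟩
    · rintro ⟨a, ⟨_, hall⟩, hxa⟩
      exact hall x hxa
  rw [heq]
  exact MeasurableSet.sUnion ((hβfin.subset (Set.sep_subset _ _)).countable)
    (fun a ha => hmeas a ha.1)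

lemma detWalk_measurable {X S : Type*} [MeasurableSpace X] [MeasurableSpace S]
    [MeasurableSingletonClass S] [Countable S]
    (T : X → X) (hTm : Measurable T) (β : Set (Set X)) (hβfin : β.Finite)
    (hmeas : ∀ a ∈ β, MeasurableSet a) (hcover : ⋃₀ β = Set.univ)
    (f : S → X → S)
    (hconst : ∀ i : S, ∀ a ∈ β, ∀ x ∈ a, ∀ y ∈ a, f i x = f i y)
    (i : S) (n : ℕ) : Measurable (detWalk T f i n) := by
  have hskew : Measurable (detSkew T f) := by
    apply Measurable.prod
    · exact hTm.comp measurable_fst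
    · apply measurable_to_countable'
      intro j
      have heq : (fun p : X × S => f p.2 p.1) ⁻¹' {j}
          = ⋃ s : S, {x | f s x = j} ×ˢ ({s} : Set S) := by
        ext ⟨x, s⟩
        simp only [Set.mem_preimage, Set.mem_singleton_iff, Set.mem_iUnion, Set.mem_prod,
          Set.mem_setOf_eq]
        constructor
        · intro h; exact ⟨s, h, rfl⟩
        · rintro ⟨t, h, rfl⟩; exact h
      show MeasurableSet ((fun p : X × S => f p.2 p.1) ⁻¹' {j})
      rw [heq]
      exact MeasurableSet.iUnion fun s =>
        (meas_f_pre β hβfin hmeas hcover f hconst s j).prod (measurableSet_singleton s)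
  exact measurable_snd.comp ((hskew.iterate n).comp (measurable_id.prodMk measurable_const))

/-- If the deterministic walk is transitive on `S`, then there is a
cylinder set of positive measure that is transitive: from every point of it and every
starting state, the walk visits every state at least once. -/
theorem stmt_14 {X S : Type*} [MeasurableSpace X] [MeasurableSpace S]
    [MeasurableSingletonClass S] [Fintype S]
    (m : Measure X) [IsProbabilityMeasure m]
    (T : X → X) (hT : MeasurePreserving T m m) (hTerg : Ergodic T m)
    (β : Set (Set X)) (hMarkov : IsMarkovMap m T β) (hβfin : β.Finite)
    (f : S → X → S)
    (hconst : ∀ i : S, ∀ a ∈ β, ∀ x ∈ a, ∀ y ∈ a, f i x = f i y)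
    (hW : WalkTransitive m T f) :
    ∃ n : ℕ, 1 ≤ n ∧ ∃ w : Fin n → Set X, (∀ j, w j ∈ β) ∧
      0 < m (cylinder T w) ∧
      ∀ i : S, ∀ x ∈ cylinder T w, ∀ j : S, ∃ k : ℕ, detWalk T f i k x = j := by
  classical
  haveI : Finite ↥β := hβfin
  have hTm : Measurable T := hT.measurable
  have hmeasa := hMarkov.measurableSet
  have hcover := hMarkov.sUnion_eq
  -- measurability of the "visits j from i" sets
  have hAmeas : ∀ i j : S, MeasurableSet {x | ∃ n, 1 ≤ n ∧ detWalk T f i n x = j} := by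
    intro i j
    have heq : {x | ∃ n, 1 ≤ n ∧ detWalk T f i n x = j}
        = ⋃ n : ℕ, {x | 1 ≤ n ∧ detWalk T f i n x = j} := by
      ext x; simp [Set.mem_iUnion]
    rw [heq]
    refine MeasurableSet.iUnion fun n => ?_
    by_cases hn : 1 ≤ n
    · have h2 : {x | 1 ≤ n ∧ detWalk T f i n x = j} = detWalk T f i n ⁻¹' {j} := by
        ext x; simp [hn]
      rw [h2]
      exact (detWalk_measurable T hTm β hβfin hmeasa hcover f hconst i n)
        (measurableSet_singleton j)
    · have h2 : {x | 1 ≤ n ∧ detWalk T f i n x = j} = ∅ := by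
        ext x; simp [hn]
      rw [h2]; exact MeasurableSet.empty
  -- full measure set of "good" points
  set A : Set X := ⋂ (i : S) (j : S), {x | ∃ n, 1 ≤ n ∧ detWalk T f i n x = j} with hAdef
  have hAm : MeasurableSet A := MeasurableSet.iInter fun i => MeasurableSet.iInter fun j =>
    hAmeas i j
  have hAc : m Aᶜ = 0 := by
    rw [hAdef, Set.compl_iInter]
    refine measure_iUnion_null fun i => ?_
    rw [Set.compl_iInter]
    refine measure_iUnion_null fun j => ?_
    have := measure_compl (hAmeas i j) (measure_ne_top m _)
    rw [hW i j, measure_univ] at this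
    simpa using this
  have hA1 : m A = 1 := by
    have h := measure_add_measure_compl (μ := m) hAm
    rw [hAc, measure_univ, add_zero] at h
    exact h
  -- null set of points lying in some null cylinder
  set Bad : Set X := ⋃ (n : ℕ) (w : Fin n → ↥β)
      (_ : m (cylinder T fun j => ((w j : Set X))) = 0),
      cylinder T fun j => ((w j : Set X)) with hBaddef
  have hBad : m Bad = 0 := by
    refine measure_iUnion_null fun n => measure_iUnion_null fun w => ?_
    exact measure_iUnion_null fun h => h
  -- pick a good point
  have hne : (A \ Bad).Nonempty := by
    rw [Set.nonempty_iff_ne_empty]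
    intro hcontra
    have hsub : A ⊆ Bad := Set.diff_eq_empty.mp hcontra
    have : (1 : ENNReal) ≤ 0 := by
      calc (1 : ENNReal) = m A := hA1.symm
      _ ≤ m Bad := measure_mono hsub
      _ = 0 := hBad
    simp at this
  obtain ⟨x, hxA, hxBad⟩ := hne
  have hxA' : ∀ i j : S, ∃ n, 1 ≤ n ∧ detWalk T f i n x = j := by
    intro i j
    have := Set.mem_iInter.1 (Set.mem_iInter.1 hxA i) j
    exact this
  choose g hg1 hg2 using hxA'
  -- the word length
  set N : ℕ := max (Finset.univ.sup fun p : S × S => g p.1 p.2) 1 with hNdef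
  have hN1 : 1 ≤ N := le_max_right _ 1
  have hgN : ∀ i j : S, g i j ≤ N :=
    fun i j => le_trans (Finset.le_sup (f := fun p : S × S => g p.1 p.2) (Finset.mem_univ (i, j))) (le_max_left _ _)
  -- the word of partition elements along the orbit of x
  have hcov' : ∀ y : X, ∃ a, a ∈ β ∧ y ∈ a := by
    intro y
    have : y ∈ ⋃₀ β := by rw [hcover]; trivial
    obtain ⟨a, ha, hya⟩ := this
    exact ⟨a, ha, hya⟩
  choose pa hpaβ hpax using hcov'
  set w : Fin N → Set X := fun k => pa (T^[(k : ℕ)] x) with hwdef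
  have hwβ : ∀ j, w j ∈ β := fun j => hpaβ _
  have hxcyl : ∀ j : Fin N, T^[(j : ℕ)] x ∈ w j := fun j => hpax _
  have hxmem : x ∈ cylinder T w := Set.mem_iInter.2 fun j => hxcyl j
  -- positive measure
  have hpos : 0 < m (cylinder T w) := by
    rcases eq_or_ne (m (cylinder T w)) 0 with h0 | h0
    · exfalso
      apply hxBad
      rw [hBaddef]
      refine Set.mem_iUnion.2 ⟨N, Set.mem_iUnion.2 ⟨fun k => ⟨w k, hwβ k⟩, ?_⟩⟩
      exact Set.mem_iUnion.2 ⟨h0, hxmem⟩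
    · exact pos_iff_ne_zero.mpr h0
  refine ⟨N, hN1, w, hwβ, hpos, ?_⟩
  intro i y hy j
  refine ⟨g i j, ?_⟩
  have hycyl : ∀ k : Fin N, T^[(k : ℕ)] y ∈ w k := fun k => Set.mem_iInter.1 hy k
  have := walk_eq_of_same_word T f β hconst w hwβ hycyl hxcyl i (g i j) (hgN i j)
  rw [this]
  exact hg2 i j
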